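/- Let ρ be a state on H_{A₁} ⊗ ⋯ ⊗ H_{A_l} and suppose there exist states σ_i on H_{A_i} (i = 1,…,l) with ‖ρ − σ₁ ⊗ ⋯ ⊗ σ_l‖₁ ≤ α. Then ‖ρ − ρ_{A₁} ⊗ ⋯ ⊗ ρ_{A_l}‖₁ ≤ (l+1)α, where ρ_{A_i} denotes the reduced state of ρ on H_{A_i} obtained by taking the partial trace over all other tensor factors. -/

import Mathlib

open scoped Kronecker ComplexOrder
open Matrix

/-- The trace norm (Schatten 1-norm) of a complex matrix: `Tr √(Xᴴ X)`. -/
noncomputable def traceNorm {n : Type*} [Fintype n] [DecidableEq n] (X : Matrix n n ℂ) : ℝ :=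
  (((Matrix.posSemidef_conjTranspose_mul_self X).1.eigenvectorUnitary : Matrix n n ℂ) *
      Matrix.diagonal (((↑) : ℝ → ℂ) ∘ Real.sqrt ∘ (Matrix.posSemidef_conjTranspose_mul_self X).1.eigenvalues) *
      (star (Matrix.posSemidef_conjTranspose_mul_self X).1.eigenvectorUnitary : Matrix n n ℂ)).trace.re

/-- A quantum state: a positive semidefinite matrix with unit trace. -/
def IsState {n : Type*} [Fintype n] (ρ : Matrix n n ℂ) : Prop :=
  ρ.PosSemidef ∧ ρ.trace = 1

/-- The tensor product `N 0 ⊗ ⋯ ⊗ N (l-1)` of a family of square matrices, acting on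
the tensor product space indexed by dependent functions. -/
def tensorFamily {l : ℕ} {A : Fin l → Type*}
    (N : ∀ i, Matrix (A i) (A i) ℂ) : Matrix (∀ i, A i) (∀ i, A i) ℂ :=
  Matrix.of fun x y => ∏ i, N i (x i) (y i)

/-- A multipartite separable state across the cut `A₁ : ⋯ : A_l`: a finite convex
combination of tensor products of states. -/
def SeparableFamilyState {l : ℕ} {A : Fin l → Type*} [∀ i, Fintype (A i)]
    (σ : Matrix (∀ i, A i) (∀ i, A i) ℂ) : Prop :=
  ∃ (m : ℕ) (p : Fin m → ℝ) (τ : ∀ _ : Fin m, ∀ i, Matrix (A i) (A i) ℂ),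
    (∀ y, 0 ≤ p y) ∧ (∑ y, p y = 1) ∧ (∀ y i, IsState (τ y i)) ∧
    σ = ∑ y, (p y : ℂ) • tensorFamily (τ y)

/-- Insert a value at coordinate `i₀` into an assignment of the remaining coordinates. -/
def insertAt {l : ℕ} {A : Fin l → Type*} (i₀ : Fin l) (a : A i₀)
    (w : ∀ j : {j : Fin l // j ≠ i₀}, A j.1) : ∀ j, A j :=
  fun j => if h : j = i₀ then cast (congrArg A h).symm a else w ⟨j, h⟩

/-- Partial trace of a multipartite operator onto the `i₀`-th tensor factor
(tracing out all other factors). -/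
noncomputable def ptraceAt {l : ℕ} {A : Fin l → Type*} [∀ i, Fintype (A i)]
    [∀ i, DecidableEq (A i)] (i₀ : Fin l)
    (X : Matrix (∀ j, A j) (∀ j, A j) ℂ) : Matrix (A i₀) (A i₀) ℂ :=
  Matrix.of fun a a' =>
    ∑ w : ∀ j : {j : Fin l // j ≠ i₀}, A j.1, X (insertAt i₀ a w) (insertAt i₀ a' w)

/-- The multipartite one-way LOCC norm of an operator on `H_{A₁} ⊗ ⋯ ⊗ H_{A_l}`,
with distinguished (receiving) party `i₀`: the supremum over finite POVMs
`{Λ^{(i)}_{m_i}}` on each `H_{A_i}`, `i ≠ i₀`, of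
`Σ_{m} ‖Tr_{rest}((I_{A_{i₀}} ⊗ ⊗_{i ≠ i₀} Λ^{(i)}_{m_i}) X)‖₁`. -/
noncomputable def oneWayLOCCNormFam {l : ℕ} {A : Fin l → Type*} [∀ i, Fintype (A i)]
    [∀ i, DecidableEq (A i)] (i₀ : Fin l)
    (X : Matrix (∀ i, A i) (∀ i, A i) ℂ) : ℝ :=
  sSup { r : ℝ | ∃ (M : Fin l → ℕ) (Λ : ∀ i, Fin (M i) → Matrix (A i) (A i) ℂ),
    M i₀ = 1 ∧ (∀ m, Λ i₀ m = 1) ∧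
    (∀ i, i ≠ i₀ → ∀ m, (Λ i m).PosSemidef) ∧
    (∀ i, i ≠ i₀ → ∑ m, Λ i m = 1) ∧
    r = ∑ m : ∀ i, Fin (M i),
      traceNorm (ptraceAt i₀ (tensorFamily (fun i => Λ i (m i)) * X)) }

/-- `k`-extendibility of a multipartite state `ρ` on `H_{A₁} ⊗ ⋯ ⊗ H_{A_l}` (with
respect to the cut `A₁ : ⋯ : A_l`): there is a state `ω` on `⊗_i H_{A_i}^{⊗k}`
invariant under every permutation of the `k` copies within each group, whose partial
trace over all but the first copy in each group equals `ρ`. -/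
def KExtendible {l : ℕ} {A : Fin l → Type*} [∀ i, Fintype (A i)]
    (k : ℕ) (hk : 0 < k) (ρ : Matrix (∀ i, A i) (∀ i, A i) ℂ) : Prop :=
  ∃ ω : Matrix (∀ i, Fin k → A i) (∀ i, Fin k → A i) ℂ,
    IsState ω ∧
    (∀ π : ∀ _ : Fin l, Equiv.Perm (Fin k), ∀ x y : ∀ i, Fin k → A i,
      ω (fun i j => x i (π i j)) (fun i j => y i (π i j)) = ω x y) ∧
    (∀ x y : ∀ i, A i, ρ x y =
      ∑ w : ∀ i : Fin l, {j : Fin k // j ≠ ⟨0, hk⟩} → A i,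
        ω (fun i j => if h : j = ⟨0, hk⟩ then x i else w i ⟨j, h⟩)
          (fun i j => if h : j = ⟨0, hk⟩ then y i else w i ⟨j, h⟩))


set_option linter.unusedSectionVars false

namespace TNAux

section herm
variable {n : Type*} [Fintype n] [DecidableEq n]

/-- Functional calculus for a Hermitian matrix. -/
noncomputable def cfc {X : Matrix n n ℂ} (hX : X.IsHermitian) (f : ℝ → ℝ) : Matrix n n ℂ :=
  (hX.eigenvectorUnitary : Matrix n n ℂ) *
    Matrix.diagonal (fun i => (f (hX.eigenvalues i) : ℂ)) *
    star (hX.eigenvectorUnitary : Matrix n n ℂ)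

variable {X : Matrix n n ℂ} (hX : X.IsHermitian)

lemma cfc_id : cfc hX id = X := by
  exact hX.spectral_theorem.symm

lemma cfc_one : cfc hX (fun _ => 1) = 1 := by
  simp [cfc, Matrix.diagonal_one]

lemma cfc_mul (f g : ℝ → ℝ) : cfc hX f * cfc hX g = cfc hX (fun t => f t * g t) := by
  have h1 : star (hX.eigenvectorUnitary : Matrix n n ℂ) *
      (hX.eigenvectorUnitary : Matrix n n ℂ) = 1 :=
    (Matrix.mem_unitaryGroup_iff').mp hX.eigenvectorUnitary.2
  simp only [cfc, Matrix.mul_assoc]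
  rw [← Matrix.mul_assoc (star (hX.eigenvectorUnitary : Matrix n n ℂ))
      (hX.eigenvectorUnitary : Matrix n n ℂ), h1, Matrix.one_mul,
    ← Matrix.mul_assoc (Matrix.diagonal _) (Matrix.diagonal _), Matrix.diagonal_mul_diagonal]
  push_cast
  rfl

lemma cfc_sub (f g : ℝ → ℝ) : cfc hX f - cfc hX g = cfc hX (fun t => f t - g t) := by
  simp only [cfc, ← Matrix.sub_mul, ← Matrix.mul_sub, Matrix.diagonal_sub]
  push_cast
  rfl

lemma cfc_add (f g : ℝ → ℝ) : cfc hX f + cfc hX g = cfc hX (fun t => f t + g t) := by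
  simp only [cfc, ← Matrix.add_mul, ← Matrix.mul_add, Matrix.diagonal_add]
  push_cast
  rfl

lemma cfc_posSemidef {f : ℝ → ℝ} (hf : ∀ t, 0 ≤ f t) : (cfc hX f).PosSemidef := by
  have hd : (Matrix.diagonal (fun i => (f (hX.eigenvalues i) : ℂ))).PosSemidef :=
    Matrix.posSemidef_diagonal_iff.mpr fun i => by
      exact_mod_cast Complex.zero_le_real.mpr (hf _)
  exact hd.mul_mul_conjTranspose_same (hX.eigenvectorUnitary : Matrix n n ℂ)

lemma cfc_isHermitian (f : ℝ → ℝ) : (cfc hX f).IsHermitian := by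
  have hd : (Matrix.diagonal (fun i => (f (hX.eigenvalues i) : ℂ))).IsHermitian :=
    Matrix.isHermitian_diagonal_iff.mpr fun i => Complex.conj_ofReal _
  exact Matrix.isHermitian_mul_mul_conjTranspose
    (hX.eigenvectorUnitary : Matrix n n ℂ) hd

lemma trace_cfc (f : ℝ → ℝ) : (cfc hX f).trace = ((∑ i, f (hX.eigenvalues i) : ℝ) : ℂ) := by
  have h1 : star (hX.eigenvectorUnitary : Matrix n n ℂ) *
      (hX.eigenvectorUnitary : Matrix n n ℂ) = 1 :=
    (Matrix.mem_unitaryGroup_iff').mp hX.eigenvectorUnitary.2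
  rw [cfc, Matrix.trace_mul_comm, ← Matrix.mul_assoc, h1, Matrix.one_mul, Matrix.trace_diagonal]
  push_cast
  rfl


end herm

section herm2
variable {n : Type*} [Fintype n] [DecidableEq n] {X : Matrix n n ℂ}

lemma traceNorm_eq_cfc (X : Matrix n n ℂ) :
    traceNorm X = (_root_.cfc Real.sqrt (Xᴴ * X)).trace.re := by
  rw [(Matrix.posSemidef_conjTranspose_mul_self X).1.cfc_eq, Matrix.IsHermitian.cfc,
    Unitary.conjStarAlgAut_apply]
  rfl

lemma traceNorm_eq_sum_abs (hX : X.IsHermitian) :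
    traceNorm X = ∑ i, |hX.eigenvalues i| := by
  have habs : (cfc hX fun t => |t|).PosSemidef := cfc_posSemidef hX fun t => abs_nonneg t
  have hsq : (cfc hX fun t => |t|) ^ 2 = Xᴴ * X := by
    rw [sq, cfc_mul]
    have h1 : (fun t : ℝ => |t| * |t|) = fun t : ℝ => t * t := by
      funext t; exact abs_mul_abs_self t
    have h2 := cfc_mul hX id id
    simp only [id_eq] at h2
    rw [h1, ← h2, cfc_id, hX.eq]
  have e : _root_.cfc Real.sqrt (Xᴴ * X) = _root_.cfc (fun t : ℝ => |t|) X := by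
    have hX' : IsSelfAdjoint X := hX
    rw [hX.eq, ← sq, ← cfc_pow_id (R := ℝ) X 2 hX', ← cfc_comp' Real.sqrt (· ^ 2) X]
    exact cfc_congr (fun t _ => Real.sqrt_sq_eq_abs t)
  rw [traceNorm_eq_cfc, e, hX.cfc_eq, Matrix.IsHermitian.cfc, Unitary.conjStarAlgAut_apply]
  exact (congrArg Complex.re (trace_cfc hX (fun t => |t|))).trans (Complex.ofReal_re _)

lemma traceNorm_nonneg' (hX : X.IsHermitian) : 0 ≤ traceNorm X := by
  rw [traceNorm_eq_sum_abs hX]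
  exact Finset.sum_nonneg fun i _ => abs_nonneg _

lemma traceNorm_of_posSemidef {P : Matrix n n ℂ} (hP : P.PosSemidef) :
    traceNorm P = P.trace.re := by
  rw [traceNorm_eq_sum_abs hP.1]
  conv_rhs => rw [← cfc_id hP.1]
  rw [trace_cfc, Complex.ofReal_re]
  exact Finset.sum_congr rfl fun i _ => abs_of_nonneg (hP.eigenvalues_nonneg i)

lemma trace_re_nonneg {R : Matrix n n ℂ} (hR : R.PosSemidef) : 0 ≤ R.trace.re := by
  conv_rhs => rw [← cfc_id hR.1]
  rw [trace_cfc, Complex.ofReal_re]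
  exact Finset.sum_nonneg fun i _ => hR.eigenvalues_nonneg i

lemma cfc_congr_ev (hX : X.IsHermitian) {f g : ℝ → ℝ}
    (hfg : ∀ i, f (hX.eigenvalues i) = g (hX.eigenvalues i)) : cfc hX f = cfc hX g := by
  simp only [cfc, hfg]

lemma exists_conjTranspose_mul_self {P : Matrix n n ℂ} (hP : P.PosSemidef) :
    ∃ B : Matrix n n ℂ, P = Bᴴ * B := by
  refine ⟨cfc hP.1 Real.sqrt, ?_⟩
  rw [(cfc_isHermitian hP.1 _).eq, cfc_mul]
  conv_lhs => rw [← cfc_id hP.1]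
  exact cfc_congr_ev hP.1 fun i => (Real.mul_self_sqrt (hP.eigenvalues_nonneg i)).symm

lemma trace_mul_psd_nonneg {P Q : Matrix n n ℂ} (hP : P.PosSemidef) (hQ : Q.PosSemidef) :
    0 ≤ (P * Q).trace.re := by
  obtain ⟨B, rfl⟩ := exists_conjTranspose_mul_self hP
  rw [← Matrix.trace_mul_cycle]
  exact trace_re_nonneg (hQ.mul_mul_conjTranspose_same B)

lemma contraction_pairing_le {Λ : Matrix n n ℂ} (hX : X.IsHermitian)
    (h1 : (1 - Λ).PosSemidef) (h2 : (1 + Λ).PosSemidef) :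
    (Λ * X).trace.re ≤ traceNorm X := by
  set P := cfc hX (fun t => max t 0) with hPdef
  set Q := cfc hX (fun t => max (-t) 0) with hQdef
  have hPpsd : P.PosSemidef := cfc_posSemidef hX fun t => le_max_right _ _
  have hQpsd : Q.PosSemidef := cfc_posSemidef hX fun t => le_max_right _ _
  have hXPQ : X = P - Q := by
    rw [hPdef, hQdef, cfc_sub]
    have h3 : (fun t : ℝ => max t 0 - max (-t) 0) = id :=
      funext fun t => max_zero_sub_max_neg_zero_eq_self t
    rw [h3, cfc_id]
  have key1 : (Λ * P).trace.re ≤ P.trace.re := by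
    have := trace_mul_psd_nonneg h1 hPpsd
    rw [Matrix.sub_mul, Matrix.one_mul, Matrix.trace_sub] at this
    simpa using this
  have key2 : -(Λ * Q).trace.re ≤ Q.trace.re := by
    have := trace_mul_psd_nonneg h2 hQpsd
    rw [Matrix.add_mul, Matrix.one_mul, Matrix.trace_add] at this
    simp only [Complex.add_re] at this
    linarith
  have hnorm : traceNorm X = P.trace.re + Q.trace.re := by
    rw [traceNorm_eq_sum_abs hX, hPdef, hQdef, trace_cfc, trace_cfc,
      Complex.ofReal_re, Complex.ofReal_re, ← Finset.sum_add_distrib]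
    exact Finset.sum_congr rfl fun i _ => (max_zero_add_max_neg_zero_eq_abs_self _).symm
  have hfin : (Λ * X).trace.re = (Λ * P).trace.re - (Λ * Q).trace.re := by
    conv_lhs => rw [hXPQ]
    rw [Matrix.mul_sub, Matrix.trace_sub, Complex.sub_re]
  rw [hfin, hnorm]
  linarith

lemma exists_dual (hX : X.IsHermitian) :
    ∃ S : Matrix n n ℂ, (1 - S).PosSemidef ∧ (1 + S).PosSemidef ∧
      (S * X).trace.re = traceNorm X := by
  refine ⟨cfc hX (fun t => if 0 ≤ t then 1 else -1), ?_, ?_, ?_⟩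
  · rw [← cfc_one hX, cfc_sub]
    exact cfc_posSemidef hX fun t => by split <;> norm_num
  · rw [← cfc_one hX, cfc_add]
    exact cfc_posSemidef hX fun t => by split <;> norm_num
  · have h2 := cfc_mul hX (fun t => if 0 ≤ t then 1 else -1) id
    simp only [id_eq] at h2
    rw [cfc_id hX] at h2
    rw [h2, trace_cfc, traceNorm_eq_sum_abs hX, Complex.ofReal_re]
    refine Finset.sum_congr rfl fun i _ => ?_
    rcases le_or_gt 0 (hX.eigenvalues i) with h | h
    · rw [if_pos h, one_mul, abs_of_nonneg h]
    · rw [if_neg (not_le.mpr h), neg_one_mul, abs_of_neg h]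

lemma traceNorm_triangle {Y : Matrix n n ℂ} (hX : X.IsHermitian) (hY : Y.IsHermitian) :
    traceNorm (X + Y) ≤ traceNorm X + traceNorm Y := by
  obtain ⟨S, h1, h2, h3⟩ := exists_dual (hX.add hY)
  rw [← h3, Matrix.mul_add, Matrix.trace_add, Complex.add_re]
  exact add_le_add (contraction_pairing_le hX h1 h2) (contraction_pairing_le hY h1 h2)

lemma traceNorm_zero : traceNorm (0 : Matrix n n ℂ) = 0 := by
  have h0 : (0 : Matrix n n ℂ).PosSemidef := Matrix.PosSemidef.zero
  rw [traceNorm_of_posSemidef h0]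
  simp

lemma traceNorm_neg (X : Matrix n n ℂ) : traceNorm (-X) = traceNorm X := by
  have h : (-X)ᴴ * (-X) = Xᴴ * X := by simp
  rw [traceNorm_eq_cfc, traceNorm_eq_cfc, h]

lemma isHermitian_sum {ι : Type*} (s : Finset ι) (f : ι → Matrix n n ℂ)
    (hf : ∀ i ∈ s, (f i).IsHermitian) : (∑ i ∈ s, f i).IsHermitian := by
  rw [Matrix.IsHermitian, Matrix.conjTranspose_sum]
  exact Finset.sum_congr rfl hf

lemma traceNorm_sum_le {ι : Type*} (s : Finset ι) (f : ι → Matrix n n ℂ)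
    (hf : ∀ i ∈ s, (f i).IsHermitian) :
    traceNorm (∑ i ∈ s, f i) ≤ ∑ i ∈ s, traceNorm (f i) := by
  classical
  induction s using Finset.induction_on with
  | empty => simp [traceNorm_zero]
  | @insert a s' hnot ih =>
    rw [Finset.sum_insert hnot, Finset.sum_insert hnot]
    refine le_trans (traceNorm_triangle (hf a (Finset.mem_insert_self a s'))
      (isHermitian_sum s' f fun i hi => hf i (Finset.mem_insert_of_mem hi))) ?_
    exact add_le_add le_rfl (ih fun i hi => hf i (Finset.mem_insert_of_mem hi))


lemma exists_decomp {n : Type*} [Fintype n] [DecidableEq n] {X : Matrix n n ℂ}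
    (hX : X.IsHermitian) :
    ∃ P Q : Matrix n n ℂ, P.PosSemidef ∧ Q.PosSemidef ∧ X = P - Q ∧
      traceNorm X = P.trace.re + Q.trace.re := by
  refine ⟨cfc hX (fun t => max t 0), cfc hX (fun t => max (-t) 0),
    cfc_posSemidef hX (fun t => le_max_right _ _),
    cfc_posSemidef hX (fun t => le_max_right _ _), ?_, ?_⟩
  · rw [cfc_sub]
    have h3 : (fun t : ℝ => max t 0 - max (-t) 0) = id :=
      funext fun t => max_zero_sub_max_neg_zero_eq_self t
    rw [h3, cfc_id]
  · rw [traceNorm_eq_sum_abs hX, trace_cfc, trace_cfc, Complex.ofReal_re, Complex.ofReal_re,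
      ← Finset.sum_add_distrib]
    exact Finset.sum_congr rfl fun i _ => (max_zero_add_max_neg_zero_eq_abs_self _).symm

end herm2

section tens
variable {l : ℕ} {A : Fin l → Type*} [∀ i, Fintype (A i)] [∀ i, DecidableEq (A i)]

lemma prod_split {M : Type*} [CommMonoid M] (i : Fin l) (f : Fin l → M) :
    ∏ j, f j = f i * ∏ j : {j : Fin l // j ≠ i}, f j := by
  rw [← Finset.mul_prod_erase Finset.univ f (Finset.mem_univ i)]
  congr 1
  exact Finset.prod_subtype (Finset.univ.erase i) (fun x => by simp) f

lemma sum_split {M : Type*} [AddCommMonoid M] (i : Fin l) (f : Fin l → M) :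
    ∑ j, f j = f i + ∑ j : {j : Fin l // j ≠ i}, f j := by
  rw [← Finset.add_sum_erase Finset.univ f (Finset.mem_univ i)]
  congr 1
  exact Finset.sum_subtype (Finset.univ.erase i) (fun x => by simp) f

lemma insertAt_same (i : Fin l) (a : A i) (w : ∀ j : {j : Fin l // j ≠ i}, A j.1) :
    insertAt i a w i = a := by
  simp [insertAt]

lemma insertAt_ne (i : Fin l) (a : A i) (w : ∀ j : {j : Fin l // j ≠ i}, A j.1)
    (j : {j : Fin l // j ≠ i}) : insertAt i a w j.1 = w j := by
  simp [insertAt, j.2]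

lemma piSplitAt_symm_eq (i : Fin l) (a : A i) (w : ∀ j : {j : Fin l // j ≠ i}, A j.1) :
    (Equiv.piSplitAt i A).symm (a, w) = insertAt i a w := by
  funext j
  by_cases h : j = i
  · subst h
    simp [Equiv.piSplitAt, insertAt]
  · simp [Equiv.piSplitAt, insertAt, h]

lemma sum_insertAt {β : Type*} [AddCommMonoid β] (i : Fin l) (f : (∀ j, A j) → β) :
    ∑ x, f x = ∑ a : A i, ∑ w : ∀ j : {j : Fin l // j ≠ i}, A j.1, f (insertAt i a w) := by
  rw [← Equiv.sum_comp (Equiv.piSplitAt i A).symm f, Fintype.sum_prod_type]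
  exact Finset.sum_congr rfl fun a _ => Finset.sum_congr rfl fun w _ => by
    rw [piSplitAt_symm_eq]

lemma tensorFamily_mul (M N : ∀ i, Matrix (A i) (A i) ℂ) :
    tensorFamily M * tensorFamily N = tensorFamily fun i => M i * N i := by
  ext x y
  simp only [Matrix.mul_apply, tensorFamily, Matrix.of_apply, ← Finset.prod_mul_distrib]
  rw [Finset.prod_univ_sum, Fintype.piFinset_univ]

lemma tensorFamily_conjTranspose (N : ∀ i, Matrix (A i) (A i) ℂ) :
    (tensorFamily N)ᴴ = tensorFamily fun i => (N i)ᴴ := by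
  ext x y
  simp [tensorFamily, Matrix.conjTranspose_apply, star_prod]

lemma tensorFamily_posSemidef {N : ∀ i, Matrix (A i) (A i) ℂ}
    (hN : ∀ i, (N i).PosSemidef) : (tensorFamily N).PosSemidef := by
  choose B hB using fun i => exists_conjTranspose_mul_self (hN i)
  have h2 : tensorFamily N = (tensorFamily B)ᴴ * tensorFamily B := by
    rw [tensorFamily_conjTranspose, tensorFamily_mul, show (fun i => (B i)ᴴ * B i) = N
      from funext fun i => (hB i).symm]
  rw [h2]
  exact Matrix.posSemidef_conjTranspose_mul_self _

lemma tensorFamily_isHermitian {N : ∀ i, Matrix (A i) (A i) ℂ}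
    (hN : ∀ i, (N i).IsHermitian) : (tensorFamily N).IsHermitian := by
  rw [Matrix.IsHermitian, tensorFamily_conjTranspose,
    show (fun i => (N i)ᴴ) = N from funext fun i => hN i]

lemma tensorFamily_one : tensorFamily (fun i => (1 : Matrix (A i) (A i) ℂ)) = 1 := by
  ext x y
  simp only [tensorFamily, Matrix.of_apply, Matrix.one_apply]
  by_cases h : x = y
  · subst h; simp
  · rw [if_neg h]
    obtain ⟨i, hi⟩ := Function.ne_iff.mp h
    exact Finset.prod_eq_zero (Finset.mem_univ i) (by simp [hi])

lemma trace_tensorFamily (N : ∀ i, Matrix (A i) (A i) ℂ) :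
    (tensorFamily N).trace = ∏ i, (N i).trace := by
  simp only [Matrix.trace, Matrix.diag_apply, tensorFamily, Matrix.of_apply]
  rw [Finset.prod_univ_sum, Fintype.piFinset_univ]

lemma tensorFamily_update_sub (N : ∀ i, Matrix (A i) (A i) ℂ) (i : Fin l)
    (B C : Matrix (A i) (A i) ℂ) :
    tensorFamily (Function.update N i (B - C)) =
      tensorFamily (Function.update N i B) - tensorFamily (Function.update N i C) := by
  ext x y
  have hp : ∀ D : Matrix (A i) (A i) ℂ,
      (∏ j : {j : Fin l // j ≠ i}, Function.update N i D j.1 (x j.1) (y j.1)) =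
        ∏ j : {j : Fin l // j ≠ i}, N j.1 (x j.1) (y j.1) :=
    fun D => Finset.prod_congr rfl fun j _ => by rw [Function.update_of_ne j.2]
  simp only [tensorFamily, Matrix.of_apply, Matrix.sub_apply]
  rw [prod_split i, prod_split i, prod_split i, hp, hp, hp,
    Function.update_self, Function.update_self, Function.update_self,
    Matrix.sub_apply, sub_mul]

variable {i : Fin l} {X Y : Matrix (∀ j, A j) (∀ j, A j) ℂ}

lemma ptraceAt_sub (i : Fin l) (X Y : Matrix (∀ j, A j) (∀ j, A j) ℂ) :
    ptraceAt i (X - Y) = ptraceAt i X - ptraceAt i Y := by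
  ext a a'
  simp [ptraceAt, Finset.sum_sub_distrib]

lemma ptraceAt_isHermitian (hX : X.IsHermitian) (i : Fin l) :
    (ptraceAt i X).IsHermitian := by
  rw [Matrix.IsHermitian]
  ext a a'
  simp only [Matrix.conjTranspose_apply, ptraceAt, Matrix.of_apply, star_sum]
  exact Finset.sum_congr rfl fun w _ => hX.apply _ _

/-- The isometry-like selection matrices realizing the partial trace as conjugations. -/
def selAt (i : Fin l) (w : ∀ j : {j : Fin l // j ≠ i}, A j.1) :
    Matrix (A i) (∀ j, A j) ℂ :=
  Matrix.of fun a x => if x = insertAt i a w then 1 else 0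

lemma ptraceAt_eq_sum_conj (i : Fin l) (X : Matrix (∀ j, A j) (∀ j, A j) ℂ) :
    ptraceAt i X = ∑ w, ((selAt i w * X : Matrix (A i) (∀ j, A j) ℂ) * (selAt i w)ᴴ : Matrix (A i) (A i) ℂ) := by
  ext a a'
  simp only [ptraceAt, Matrix.of_apply, Matrix.sum_apply]
  refine Finset.sum_congr rfl fun w _ => ?_
  have h1 : ∀ y, (selAt i w * X : Matrix (A i) (∀ j, A j) ℂ) a y = X (insertAt i a w) y := fun y => by
    simp [selAt, Matrix.mul_apply, ite_mul, one_mul, zero_mul, Finset.sum_ite_eq']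
  have h2 : ((selAt i w * X : Matrix (A i) (∀ j, A j) ℂ) * (selAt i w)ᴴ : Matrix (A i) (A i) ℂ) a a' = X (insertAt i a w) (insertAt i a' w) := by
    rw [Matrix.mul_apply]
    simp only [h1, Matrix.conjTranspose_apply, selAt, Matrix.of_apply,
      apply_ite (star : ℂ → ℂ), star_one, star_zero, mul_ite, mul_one, mul_zero]
    simp only [Finset.sum_ite_eq', Finset.mem_univ, if_pos]
    exact h1 _
  exact h2.symm

lemma posSemidef_sum {ι : Type*} (s : Finset ι) (f : ι → Matrix (∀ j, A j) (∀ j, A j) ℂ)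
    (hf : ∀ i ∈ s, (f i).PosSemidef) : (∑ i ∈ s, f i).PosSemidef := by
  classical
  induction s using Finset.induction_on with
  | empty => simpa using (Matrix.PosSemidef.zero)
  | @insert a s' hnot ih =>
    rw [Finset.sum_insert hnot]
    exact (hf a (Finset.mem_insert_self a s')).add
      (ih fun i hi => hf i (Finset.mem_insert_of_mem hi))

lemma ptraceAt_posSemidef (hX : X.PosSemidef) (i : Fin l) :
    (ptraceAt i X).PosSemidef := by
  rw [ptraceAt_eq_sum_conj]
  refine Finset.sum_induction _ _ (fun a b ha hb => ha.add hb) Matrix.PosSemidef.zero ?_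
  exact fun w _ => hX.mul_mul_conjTranspose_same (selAt i w)

lemma trace_ptraceAt (i : Fin l) (X : Matrix (∀ j, A j) (∀ j, A j) ℂ) :
    (ptraceAt i X).trace = X.trace := by
  simp only [Matrix.trace, Matrix.diag_apply, ptraceAt, Matrix.of_apply]
  exact (sum_insertAt i fun x => X x x).symm

lemma ptraceAt_tensorFamily (i : Fin l) (N : ∀ j, Matrix (A j) (A j) ℂ) :
    ptraceAt i (tensorFamily N) = (∏ j : {j : Fin l // j ≠ i}, (N j.1).trace) • N i := by
  ext a a'
  have h1 : ∀ w, (∏ j, N j (insertAt i a w j) (insertAt i a' w j)) =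
      N i a a' * ∏ j : {j : Fin l // j ≠ i}, N j.1 (w j) (w j) := fun w => by
    rw [prod_split i]
    rw [insertAt_same, insertAt_same]
    congr 1
    exact Finset.prod_congr rfl fun j _ => by rw [insertAt_ne, insertAt_ne]
  simp only [ptraceAt, Matrix.of_apply, tensorFamily, Matrix.smul_apply, smul_eq_mul, h1]
  rw [← Finset.mul_sum, mul_comm]
  congr 1
  simp only [Matrix.trace, Matrix.diag_apply]
  rw [Finset.prod_univ_sum, Fintype.piFinset_univ]


variable {i : Fin l} {X Y : Matrix (∀ j, A j) (∀ j, A j) ℂ}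

lemma tensorFamily_update_add (N : ∀ i, Matrix (A i) (A i) ℂ) (i : Fin l)
    (B C : Matrix (A i) (A i) ℂ) :
    tensorFamily (Function.update N i (B + C)) =
      tensorFamily (Function.update N i B) + tensorFamily (Function.update N i C) := by
  have hz : tensorFamily (Function.update N i (0 : Matrix (A i) (A i) ℂ)) = 0 := by
    ext x y
    exact Finset.prod_eq_zero (Finset.mem_univ i) (by rw [Function.update_self]; rfl)
  have h := tensorFamily_update_sub N i B (-C)
  simp only [sub_neg_eq_add] at h
  have h2 : Function.update N i (-C) = Function.update N i ((0 : Matrix (A i) (A i) ℂ) - C) := by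
    rw [zero_sub]
  rw [h, h2, tensorFamily_update_sub N i 0 C, hz]
  abel

lemma prod_ite_eq_ite {i : Fin l} (w w' : ∀ j : {j : Fin l // j ≠ i}, A j.1) :
    (∏ j : {j : Fin l // j ≠ i}, if w j = w' j then (1:ℂ) else 0) =
      if w = w' then 1 else 0 := by
  by_cases h : w = w'
  · subst h; simp
  · rw [if_neg h]
    obtain ⟨j, hj⟩ := Function.ne_iff.mp h
    exact Finset.prod_eq_zero (Finset.mem_univ j) (by simp [hj])

lemma restr_insertAt (i : Fin l) (a : A i) (w : ∀ j : {j : Fin l // j ≠ i}, A j.1) :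
    (fun j : {j : Fin l // j ≠ i} => insertAt i a w j.1) = w :=
  funext fun j => insertAt_ne i a w j

lemma trace_update_mul (i : Fin l) (S : Matrix (A i) (A i) ℂ)
    (X : Matrix (∀ j, A j) (∀ j, A j) ℂ) :
    (tensorFamily (Function.update (fun j => (1 : Matrix (A j) (A j) ℂ)) i S) * X).trace
      = (S * ptraceAt i X).trace := by
  have hT : ∀ x y : ∀ j, A j,
      tensorFamily (Function.update (fun j => (1 : Matrix (A j) (A j) ℂ)) i S) x y
        = S (x i) (y i) *
          if (fun j : {j : Fin l // j ≠ i} => x j.1) = (fun j : {j : Fin l // j ≠ i} => y j.1) then 1 else 0 := by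
    intro x y
    simp only [tensorFamily, Matrix.of_apply]
    rw [prod_split i, Function.update_self]
    congr 1
    rw [← prod_ite_eq_ite (fun j : {j : Fin l // j ≠ i} => x j.1) (fun j : {j : Fin l // j ≠ i} => y j.1)]
    exact Finset.prod_congr rfl fun j _ => by
      rw [Function.update_of_ne j.2, Matrix.one_apply]
  simp only [Matrix.trace, Matrix.diag_apply, Matrix.mul_apply, hT, ptraceAt, Matrix.of_apply]
  rw [sum_insertAt i]
  refine Finset.sum_congr rfl fun a _ => ?_
  have inner : ∀ w, (∑ y, (S (insertAt i a w i) (y i) *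
      if (fun j : {j : Fin l // j ≠ i} => insertAt i a w j.1) = (fun j : {j : Fin l // j ≠ i} => y j.1) then 1 else 0) *
        X y (insertAt i a w)) = ∑ a', S a a' * X (insertAt i a' w) (insertAt i a w) := by
    intro w
    rw [sum_insertAt i]
    refine Finset.sum_congr rfl fun a' _ => ?_
    simp only [insertAt_same, restr_insertAt]
    simp [ite_mul, mul_ite, Finset.sum_ite_eq]
  simp only [inner]
  rw [Finset.sum_comm]
  simp [Finset.mul_sum]

lemma update_posSemidef {τ : ∀ j, Matrix (A j) (A j) ℂ} (hτ : ∀ j, (τ j).PosSemidef)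
    (i : Fin l) {D : Matrix (A i) (A i) ℂ} (hD : D.PosSemidef) (j : Fin l) :
    ((Function.update τ i D) j).PosSemidef := by
  rcases eq_or_ne j i with h | h
  · subst h; rwa [Function.update_self]
  · rw [Function.update_of_ne h]; exact hτ j

lemma update_isHermitian {τ : ∀ j, Matrix (A j) (A j) ℂ} (hτ : ∀ j, (τ j).IsHermitian)
    (i : Fin l) {D : Matrix (A i) (A i) ℂ} (hD : D.IsHermitian) (j : Fin l) :
    ((Function.update τ i D) j).IsHermitian := by
  rcases eq_or_ne j i with h | h
  · subst h; rwa [Function.update_self]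
  · rw [Function.update_of_ne h]; exact hτ j

lemma traceNorm_ptraceAt_le {X : Matrix (∀ j, A j) (∀ j, A j) ℂ} (hX : X.IsHermitian)
    (i : Fin l) : traceNorm (ptraceAt i X) ≤ traceNorm X := by
  obtain ⟨S, h1, h2, h3⟩ := exists_dual (ptraceAt_isHermitian hX i)
  rw [← h3, ← trace_update_mul]
  set o : ∀ j, Matrix (A j) (A j) ℂ := fun j => 1 with ho
  have hupd1 : Function.update o i (1 : Matrix (A i) (A i) ℂ) = o := by
    rw [ho]; exact Function.update_eq_self i o
  refine contraction_pairing_le hX ?_ ?_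
  · have : (1 : Matrix (∀ j, A j) (∀ j, A j) ℂ) - tensorFamily (Function.update o i S)
        = tensorFamily (Function.update o i (1 - S)) := by
      rw [tensorFamily_update_sub, hupd1, tensorFamily_one]
    rw [this]
    exact tensorFamily_posSemidef (update_posSemidef (fun j => Matrix.PosSemidef.one) i h1)
  · have : (1 : Matrix (∀ j, A j) (∀ j, A j) ℂ) + tensorFamily (Function.update o i S)
        = tensorFamily (Function.update o i (1 + S)) := by
      rw [tensorFamily_update_add, hupd1, tensorFamily_one]
    rw [this]
    exact tensorFamily_posSemidef (update_posSemidef (fun j => Matrix.PosSemidef.one) i h2)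

lemma trace_tensor_update_state {τ : ∀ j, Matrix (A j) (A j) ℂ} (hτ : ∀ j, IsState (τ j))
    (i : Fin l) (D : Matrix (A i) (A i) ℂ) :
    (tensorFamily (Function.update τ i D)).trace = D.trace := by
  rw [trace_tensorFamily, prod_split i, Function.update_self]
  have : ∀ j : {j : Fin l // j ≠ i}, ((Function.update τ i D) j.1).trace = 1 := fun j => by
    rw [Function.update_of_ne j.2]; exact (hτ j.1).2
  rw [Finset.prod_congr rfl fun j _ => this j]
  simp

lemma traceNorm_tensor_update_le {τ : ∀ j, Matrix (A j) (A j) ℂ} (hτ : ∀ j, IsState (τ j))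
    (i : Fin l) {D : Matrix (A i) (A i) ℂ} (hD : D.IsHermitian) :
    traceNorm (tensorFamily (Function.update τ i D)) ≤ traceNorm D := by
  obtain ⟨P, Q, hP, hQ, hPQ, htn⟩ := exists_decomp hD
  have hsplit : tensorFamily (Function.update τ i D) =
      tensorFamily (Function.update τ i P) + -tensorFamily (Function.update τ i Q) := by
    rw [hPQ, tensorFamily_update_sub]; abel
  have hPp := tensorFamily_posSemidef (update_posSemidef (fun j => (hτ j).1) i hP)
  have hQp := tensorFamily_posSemidef (update_posSemidef (fun j => (hτ j).1) i hQ)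
  calc traceNorm (tensorFamily (Function.update τ i D))
      ≤ traceNorm (tensorFamily (Function.update τ i P)) +
        traceNorm (-tensorFamily (Function.update τ i Q)) := by
        rw [hsplit]; exact traceNorm_triangle hPp.1 hQp.1.neg
    _ = (tensorFamily (Function.update τ i P)).trace.re +
        (tensorFamily (Function.update τ i Q)).trace.re := by
        rw [traceNorm_neg, traceNorm_of_posSemidef hPp, traceNorm_of_posSemidef hQp]
    _ = P.trace.re + Q.trace.re := by
        rw [trace_tensor_update_state hτ, trace_tensor_update_state hτ]
    _ = traceNorm D := htn.symm


end tens

end TNAux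

/-- If a state `ρ` on `H_{A₁} ⊗ ⋯ ⊗ H_{A_l}` satisfies
`‖ρ − σ₁ ⊗ ⋯ ⊗ σ_l‖₁ ≤ α` for some states `σ_i`, then
`‖ρ − ρ_{A₁} ⊗ ⋯ ⊗ ρ_{A_l}‖₁ ≤ (l+1)α` where `ρ_{A_i}` are the reduced states of `ρ`. -/
theorem stmt8 {l : ℕ} {A : Fin l → Type*} [∀ i, Fintype (A i)] [∀ i, DecidableEq (A i)]
    (ρ : Matrix (∀ i, A i) (∀ i, A i) ℂ) (hρ : IsState ρ)
    (σ : ∀ i, Matrix (A i) (A i) ℂ) (hσ : ∀ i, IsState (σ i))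
    (α : ℝ) (h : traceNorm (ρ - tensorFamily σ) ≤ α) :
    traceNorm (ρ - tensorFamily (fun i => ptraceAt i ρ)) ≤ ((l : ℝ) + 1) * α := by
  classical
  have hσpsd : ∀ i, (σ i).PosSemidef := fun i => (hσ i).1
  have htfσ : (tensorFamily σ).PosSemidef := TNAux.tensorFamily_posSemidef hσpsd
  have hXherm : (ρ - tensorFamily σ).IsHermitian := hρ.1.1.sub htfσ.1
  have hα0 : 0 ≤ α := le_trans (TNAux.traceNorm_nonneg' hXherm) h
  set ρA : ∀ i, Matrix (A i) (A i) ℂ := fun i => ptraceAt i ρ with hρA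
  have hρAstate : ∀ i, IsState (ρA i) := fun i =>
    ⟨TNAux.ptraceAt_posSemidef hρ.1 i, by
      rw [hρA]; dsimp only; rw [TNAux.trace_ptraceAt]; exact hρ.2⟩
  have stepA : ∀ i, traceNorm (σ i - ρA i) ≤ α := by
    intro i
    have hptσ : ptraceAt i (tensorFamily σ) = σ i := by
      rw [TNAux.ptraceAt_tensorFamily]
      have h1 : (∏ j : {j : Fin l // j ≠ i}, (σ j.1).trace) = 1 :=
        Finset.prod_eq_one fun j _ => (hσ j.1).2
      rw [h1, one_smul]
    have hsub : σ i - ρA i = -(ptraceAt i (ρ - tensorFamily σ)) := by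
      rw [TNAux.ptraceAt_sub, hptσ, neg_sub]
    rw [hsub, TNAux.traceNorm_neg]
    exact le_trans (TNAux.traceNorm_ptraceAt_le hXherm i) h
  set g : ℕ → Matrix (∀ i, A i) (∀ i, A i) ℂ :=
    fun k => tensorFamily (fun j => if (j : ℕ) < k then ρA j else σ j) with hg
  have hg0 : g 0 = tensorFamily σ := by
    have e : (fun j : Fin l => if (j : ℕ) < 0 then ρA j else σ j) = σ := by
      funext j; rw [if_neg (Nat.not_lt_zero _)]
    rw [hg]; dsimp only; rw [e]
  have hgl : g l = tensorFamily ρA := by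
    have e : (fun j : Fin l => if (j : ℕ) < l then ρA j else σ j) = ρA := by
      funext j; rw [if_pos j.isLt]
    rw [hg]; dsimp only; rw [e]
  have hstep : ∀ k ∈ Finset.range l,
      traceNorm (g k - g (k+1)) ≤ α ∧ (g k - g (k+1)).IsHermitian := by
    intro k hkmem
    have hk : k < l := Finset.mem_range.mp hkmem
    set i : Fin l := ⟨k, hk⟩ with hi
    set τ : ∀ j, Matrix (A j) (A j) ℂ := fun j => if (j : ℕ) < k then ρA j else σ j with hτ
    have hτstate : ∀ j, IsState (τ j) := fun j => by
      rw [hτ]; dsimp only; split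
      · exact hρAstate j
      · exact hσ j
    have hτi : τ i = σ i := by
      rw [hτ]; dsimp only; rw [if_neg (lt_irrefl k)]
    have hgk : g k = tensorFamily (Function.update τ i (σ i)) := by
      rw [← hτi, Function.update_eq_self]
    have hgk1 : g (k+1) = tensorFamily (Function.update τ i (ρA i)) := by
      have e : (fun j : Fin l => if (j : ℕ) < k + 1 then ρA j else σ j) =
          Function.update τ i (ρA i) := by
        funext j
        rcases eq_or_ne j i with hj | hj
        · subst hj
          rw [Function.update_self, if_pos (Nat.lt_succ_self k)]
        · rw [Function.update_of_ne hj, hτ]; dsimp only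
          have hne : (j : ℕ) ≠ k := fun hh => hj (Fin.ext hh)
          by_cases hlt : (j : ℕ) < k
          · rw [if_pos (Nat.lt_succ_of_lt hlt), if_pos hlt]
          · rw [if_neg (by omega), if_neg hlt]
      rw [hg]; dsimp only; rw [e]
    have hDh : (σ i - ρA i).IsHermitian := (hσ i).1.1.sub (hρAstate i).1.1
    have hGsub : g k - g (k+1) = tensorFamily (Function.update τ i (σ i - ρA i)) := by
      rw [hgk, hgk1, TNAux.tensorFamily_update_sub]
    constructor
    · rw [hGsub]
      exact le_trans (TNAux.traceNorm_tensor_update_le hτstate i hDh) (stepA i)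
    · rw [hGsub]
      exact TNAux.tensorFamily_isHermitian
        (TNAux.update_isHermitian (fun j => (hτstate j).1.1) i hDh)
  have htele : tensorFamily σ - tensorFamily ρA = ∑ k ∈ Finset.range l, (g k - g (k+1)) := by
    rw [Finset.sum_range_sub' g l, hg0, hgl]
  have hB : traceNorm (tensorFamily σ - tensorFamily ρA) ≤ (l : ℝ) * α := by
    rw [htele]
    refine le_trans (TNAux.traceNorm_sum_le _ _ fun k hk => (hstep k hk).2) ?_
    refine le_trans (Finset.sum_le_sum fun k hk => (hstep k hk).1) ?_
    rw [Finset.sum_const, Finset.card_range, nsmul_eq_mul]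
  have hsum : ρ - tensorFamily ρA =
      (ρ - tensorFamily σ) + (tensorFamily σ - tensorFamily ρA) := by
    rw [sub_add_sub_cancel]
  calc traceNorm (ρ - tensorFamily fun i => ptraceAt i ρ)
      = traceNorm ((ρ - tensorFamily σ) + (tensorFamily σ - tensorFamily ρA)) := by
        rw [← hsum, hρA]
    _ ≤ traceNorm (ρ - tensorFamily σ) + traceNorm (tensorFamily σ - tensorFamily ρA) :=
        TNAux.traceNorm_triangle hXherm
          (htfσ.1.sub (TNAux.tensorFamily_posSemidef fun i => (hρAstate i).1).1)
    _ ≤ α + (l : ℝ) * α := add_le_add h hB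
    _ = ((l : ℝ) + 1) * α := by ring
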